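/- Let W and W′ be r-dimensional subspaces of ℂ^{p+q}. There exist g₁ ∈ GL_p(ℂ) and g₂ ∈ GL_q(ℂ) such that the block-diagonal map diag(g₁,g₂) sends W onto W′ if and only if dim(W ∩ V⁺) = dim(W′ ∩ V⁺) and dim(W ∩ V⁻) = dim(W′ ∩ V⁻). -/

import Mathlib

open scoped Classical
open Matrix

noncomputable section

/-- A partial permutation matrix: entries in `{0,1}`, at most one `1` in each row
and in each column. -/
def IsPartialPerm {m n : ℕ} (τ : Matrix (Fin m) (Fin n) ℂ) : Prop :=
  (∀ i j, τ i j = 0 ∨ τ i j = 1) ∧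
  (∀ i j j', τ i j = 1 → τ i j' = 1 → j = j') ∧
  (∀ i i' j, τ i j = 1 → τ i' j = 1 → i = i')

/-- `(p+q) × r` complex matrices, rows indexed by `Fin p ⊕ Fin q`. -/
abbrev MatT (p q r : ℕ) := Matrix (Fin p ⊕ Fin q) (Fin r) ℂ

/-- The set `𝕋`: `(p+q) × r` matrices of rank `r` whose top `p × r` and bottom
`q × r` blocks are partial permutation matrices. -/
def InT {p q r : ℕ} (ω : MatT p q r) : Prop :=
  ω.rank = r ∧
  IsPartialPerm (Matrix.of fun (i : Fin p) (c : Fin r) => ω (Sum.inl i) c) ∧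
  IsPartialPerm (Matrix.of fun (j : Fin q) (c : Fin r) => ω (Sum.inr j) c)

/-- The permutation matrix of `w`: `(P_w)_{i,j} = 1` iff `i = w j`. -/
def permMat {r : ℕ} (w : Equiv.Perm (Fin r)) : Matrix (Fin r) (Fin r) ℂ :=
  Matrix.of fun i j => if i = w j then 1 else 0

/-- `[ω]`, the column space of `ω`, as a subspace of `ℂ^{p+q}`. -/
def colSpace {p q r : ℕ} (ω : MatT p q r) : Submodule ℂ (Fin p ⊕ Fin q → ℂ) :=
  LinearMap.range ω.mulVecLin

/-- The standard subspace spanned by `e₁,…,e_i` (first `i` vectors of the standard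
basis of `V⁺`). -/
def stdPlus (p q : ℕ) (i : ℕ) : Submodule ℂ (Fin p ⊕ Fin q → ℂ) :=
  Submodule.span ℂ {v | ∃ k : Fin p, (k : ℕ) < i ∧ v = Pi.single (Sum.inl k) 1}

/-- The standard subspace spanned by `e_{p+1},…,e_{p+j}` (first `j` vectors of the
standard basis of `V⁻`). -/
def stdMinus (p q : ℕ) (j : ℕ) : Submodule ℂ (Fin p ⊕ Fin q → ℂ) :=
  Submodule.span ℂ {v | ∃ k : Fin q, (k : ℕ) < j ∧ v = Pi.single (Sum.inr k) 1}

/-- A complete flag `0 = F 0 ⊂ F 1 ⊂ … ⊂ F n = V` with `dim F i = i`. -/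
def IsCompleteFlag {p q : ℕ} (n : ℕ) (V : Submodule ℂ (Fin p ⊕ Fin q → ℂ))
    (F : ℕ → Submodule ℂ (Fin p ⊕ Fin q → ℂ)) : Prop :=
  (∀ i j, i ≤ j → j ≤ n → F i ≤ F j) ∧
  (∀ i ≤ n, Module.finrank ℂ ↥(F i) = i) ∧ F n = V

/-- two `r`-dimensional subspaces of `ℂ^{p+q}` lie in the same
`K = GL_p × GL_q`-orbit iff the dimensions of their intersections with `V⁺` and
`V⁻` coincide. -/
lemma mem_stdPlus_iff {p q : ℕ} (x : Fin p ⊕ Fin q → ℂ) :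
    x ∈ stdPlus p q p ↔ ∀ j, x (Sum.inr j) = 0 := by
  constructor
  · intro hx j
    have hle : stdPlus p q p ≤
        LinearMap.ker (LinearMap.funLeft ℂ ℂ (Sum.inr : Fin q → Fin p ⊕ Fin q)) := by
      rw [stdPlus, Submodule.span_le]
      rintro v ⟨k, -, rfl⟩
      rw [SetLike.mem_coe, LinearMap.mem_ker]
      funext j'
      simp [LinearMap.funLeft_apply, Pi.single_apply]
    exact congrFun (LinearMap.mem_ker.mp (hle hx)) j
  · intro h
    have hx : x = ∑ k : Fin p, x (Sum.inl k) • (Pi.single (Sum.inl k) 1 : Fin p ⊕ Fin q → ℂ) := by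
      funext s
      rw [Finset.sum_apply]
      cases s with
      | inl i => simp [Pi.single_apply, Sum.inl.injEq, eq_comm]
      | inr j => simp [h j, Pi.single_apply]
    rw [hx]
    exact Submodule.sum_mem _ fun k _ => Submodule.smul_mem _ _
      (Submodule.subset_span ⟨k, k.isLt, rfl⟩)

lemma mem_stdMinus_iff {p q : ℕ} (x : Fin p ⊕ Fin q → ℂ) :
    x ∈ stdMinus p q q ↔ ∀ i, x (Sum.inl i) = 0 := by
  constructor
  · intro hx i
    have hle : stdMinus p q q ≤
        LinearMap.ker (LinearMap.funLeft ℂ ℂ (Sum.inl : Fin p → Fin p ⊕ Fin q)) := by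
      rw [stdMinus, Submodule.span_le]
      rintro v ⟨k, -, rfl⟩
      rw [SetLike.mem_coe, LinearMap.mem_ker]
      funext j'
      simp [LinearMap.funLeft_apply, Pi.single_apply]
    exact congrFun (LinearMap.mem_ker.mp (hle hx)) i
  · intro h
    have hx : x = ∑ k : Fin q, x (Sum.inr k) • (Pi.single (Sum.inr k) 1 : Fin p ⊕ Fin q → ℂ) := by
      funext s
      rw [Finset.sum_apply]
      cases s with
      | inl i => simp [h i, Pi.single_apply]
      | inr j => simp [Pi.single_apply, Sum.inr.injEq, eq_comm]
    rw [hx]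
    exact Submodule.sum_mem _ fun k _ => Submodule.smul_mem _ _
      (Submodule.subset_span ⟨k, k.isLt, rfl⟩)

lemma exists_equiv_mapsto {m : ℕ} {n : Type*} [Fintype n]
    (u u' : n → (Fin m → ℂ)) (hu : LinearIndependent ℂ u) (hu' : LinearIndependent ℂ u') :
    ∃ f : (Fin m → ℂ) ≃ₗ[ℂ] (Fin m → ℂ), ∀ k, f (u k) = u' k := by
  set U := Submodule.span ℂ (Set.range u) with hU
  set U' := Submodule.span ℂ (Set.range u') with hU'
  obtain ⟨Uc, hUc⟩ := Submodule.exists_isCompl U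
  obtain ⟨Uc', hUc'⟩ := Submodule.exists_isCompl U'
  have hdim : Module.finrank ℂ Uc = Module.finrank ℂ Uc' := by
    have h1 := Submodule.finrank_add_eq_of_isCompl hUc
    have h2 := Submodule.finrank_add_eq_of_isCompl hUc'
    have h3 : Module.finrank ℂ U = Module.finrank ℂ U' := by
      rw [hU, hU', finrank_span_eq_card hu, finrank_span_eq_card hu']
    omega
  let e₀ : U ≃ₗ[ℂ] U' := (Module.Basis.span hu).equiv (Module.Basis.span hu') (Equiv.refl n)
  let e₁ : Uc ≃ₗ[ℂ] Uc' := LinearEquiv.ofFinrankEq _ _ hdim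
  refine ⟨((Submodule.prodEquivOfIsCompl U Uc hUc).symm ≪≫ₗ (e₀.prodCongr e₁)) ≪≫ₗ
      (Submodule.prodEquivOfIsCompl U' Uc' hUc'), fun k => ?_⟩
  have hmem : u k ∈ U := Submodule.subset_span (Set.mem_range_self k)
  have h1 : (Submodule.prodEquivOfIsCompl U Uc hUc).symm (u k) = (⟨u k, hmem⟩, 0) := by
    rw [LinearEquiv.symm_apply_eq, Submodule.coe_prodEquivOfIsCompl']
    simp
  have h2 : (⟨u k, hmem⟩ : U) = Module.Basis.span hu k := (Module.Basis.span_apply hu k).symm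
  simp only [LinearEquiv.trans_apply, h1, LinearEquiv.prodCongr_apply, h2]
  rw [Module.Basis.equiv_apply]
  simp only [Equiv.refl_apply, map_zero, Submodule.coe_prodEquivOfIsCompl']
  rw [ZeroMemClass.coe_zero, add_zero]
  exact congrArg Subtype.val (Module.Basis.span_apply hu' k)
set_option maxHeartbeats 1000000 in
set_option synthInstance.maxHeartbeats 100000 in
lemma exists_adapted (p q a b c : ℕ) (W : Submodule ℂ (Fin p ⊕ Fin q → ℂ))
    (ha : Module.finrank ℂ ↥(W ⊓ stdPlus p q p) = a)
    (hb : Module.finrank ℂ ↥(W ⊓ stdMinus p q q) = b)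
    (hc : Module.finrank ℂ ↥W = a + b + c) :
    ∃ w : (Fin a ⊕ Fin b) ⊕ Fin c → (Fin p ⊕ Fin q → ℂ),
      LinearIndependent ℂ w ∧
      Submodule.span ℂ (Set.range w) = W ∧
      (∀ i j, w (.inl (.inl i)) (Sum.inr j) = 0) ∧
      (∀ i j, w (.inl (.inr i)) (Sum.inl j) = 0) ∧
      LinearIndependent ℂ (fun k : Fin a ⊕ Fin c =>
        fun i => Sum.elim (fun i' => w (.inl (.inl i'))) (fun t => w (.inr t)) k (Sum.inl i)) ∧
      LinearIndependent ℂ (fun k : Fin b ⊕ Fin c =>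
        fun j => Sum.elim (fun j' => w (.inl (.inr j'))) (fun t => w (.inr t)) k (Sum.inr j)) := by
  classical
  set A := W ⊓ stdPlus p q p with hAdef
  set B := W ⊓ stdMinus p q q with hBdef
  have hAB : A ⊓ B = ⊥ := by
    rw [eq_bot_iff]
    intro x hx
    have h1 := (mem_stdPlus_iff x).mp hx.1.2
    have h2 := (mem_stdMinus_iff x).mp hx.2.2
    have : x = 0 := by funext s; cases s with
      | inl i => exact h2 i
      | inr j => exact h1 j
    simp [this]
  -- bases of A and B
  let α0 : Module.Basis (Fin a) ℂ ↥A := Module.finBasisOfFinrankEq ℂ ↥A ha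
  let β0 : Module.Basis (Fin b) ℂ ↥B := Module.finBasisOfFinrankEq ℂ ↥B hb
  let α : Fin a → (Fin p ⊕ Fin q → ℂ) := fun i => (α0 i : Fin p ⊕ Fin q → ℂ)
  let β : Fin b → (Fin p ⊕ Fin q → ℂ) := fun j => (β0 j : Fin p ⊕ Fin q → ℂ)
  have hαind : LinearIndependent ℂ α :=
    α0.linearIndependent.map' A.subtype (Submodule.ker_subtype A)
  have hβind : LinearIndependent ℂ β :=
    β0.linearIndependent.map' B.subtype (Submodule.ker_subtype B)
  have hαspan : Submodule.span ℂ (Set.range α) = A := by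
    have : Set.range α = A.subtype '' (Set.range α0) := by
      rw [← Set.range_comp]; rfl
    rw [this, ← Submodule.map_span, Module.Basis.span_eq, Submodule.map_top, Submodule.range_subtype]
  have hβspan : Submodule.span ℂ (Set.range β) = B := by
    have : Set.range β = B.subtype '' (Set.range β0) := by
      rw [← Set.range_comp]; rfl
    rw [this, ← Submodule.map_span, Module.Basis.span_eq, Submodule.map_top, Submodule.range_subtype]
  -- complement of A ⊔ B inside W
  have hABW : A ⊔ B ≤ W := sup_le inf_le_left inf_le_left
  set S := Submodule.comap W.subtype (A ⊔ B) with hSdef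
  obtain ⟨E, hE⟩ := Submodule.exists_isCompl S
  have hmapS : Submodule.map W.subtype S = A ⊔ B := by
    rw [hSdef, Submodule.map_comap_subtype, inf_eq_right.mpr hABW]
  have hsupAB : Module.finrank ℂ ↥(A ⊔ B) = a + b := by
    have := Submodule.finrank_sup_add_finrank_inf_eq A B
    rw [hAB] at this
    simp only [finrank_bot, add_zero, ha, hb] at this
    omega
  have hfinS : Module.finrank ℂ ↥S = a + b := by
    have := Submodule.finrank_map_subtype_eq W S
    rw [hmapS] at this; omega
  have hfinE : Module.finrank ℂ ↥E = c := by
    have := Submodule.finrank_add_eq_of_isCompl hE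
    rw [hfinS] at this
    rw [hc] at this
    omega
  set C := Submodule.map W.subtype E with hCdef
  have hfinC : Module.finrank ℂ ↥C = c := by
    rw [hCdef, Submodule.finrank_map_subtype_eq]; exact hfinE
  let γ0 : Module.Basis (Fin c) ℂ ↥C := Module.finBasisOfFinrankEq ℂ ↥C hfinC
  let γ : Fin c → (Fin p ⊕ Fin q → ℂ) := fun t => (γ0 t : Fin p ⊕ Fin q → ℂ)
  have hγind : LinearIndependent ℂ γ :=
    γ0.linearIndependent.map' C.subtype (Submodule.ker_subtype C)
  have hγspan : Submodule.span ℂ (Set.range γ) = C := by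
    have : Set.range γ = C.subtype '' (Set.range γ0) := by
      rw [← Set.range_comp]; rfl
    rw [this, ← Submodule.map_span, Module.Basis.span_eq, Submodule.map_top, Submodule.range_subtype]
  have hdisj : (A ⊔ B) ⊓ C = ⊥ := by
    rw [← hmapS, hCdef, ← Submodule.map_inf _ (Submodule.injective_subtype W),
      hE.inf_eq_bot, Submodule.map_bot]
  have hsup : (A ⊔ B) ⊔ C = W := by
    rw [← hmapS, hCdef, ← Submodule.map_sup, hE.sup_eq_top, Submodule.map_top,
      Submodule.range_subtype]
  -- the full adapted family
  have hABind : LinearIndependent ℂ (Sum.elim α β) := by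
    refine hαind.sum_type hβind ?_
    rw [hαspan, hβspan, disjoint_iff, hAB]
  have hABspan : Submodule.span ℂ (Set.range (Sum.elim α β)) = A ⊔ B := by
    rw [Set.Sum.elim_range, Submodule.span_union, hαspan, hβspan]
  have hwind : LinearIndependent ℂ (Sum.elim (Sum.elim α β) γ) := by
    refine hABind.sum_type hγind ?_
    rw [hABspan, hγspan, disjoint_iff, hdisj]
  have hwspan : Submodule.span ℂ (Set.range (Sum.elim (Sum.elim α β) γ)) = W := by
    rw [Set.Sum.elim_range, Submodule.span_union, hABspan, hγspan, hsup]
  -- membership facts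
  have hαW : ∀ i, α i ∈ W := fun i => (α0 i).2.1
  have hβW : ∀ j, β j ∈ W := fun j => (β0 j).2.1
  have hγW : ∀ t, γ t ∈ W := fun t => Submodule.map_subtype_le W E (γ0 t).2
  have hαP : ∀ i j, α i (Sum.inr j) = 0 := fun i => (mem_stdPlus_iff _).mp (α0 i).2.2
  have hβM : ∀ i j, β i (Sum.inl j) = 0 := fun i => (mem_stdMinus_iff _).mp (β0 i).2.2
  refine ⟨Sum.elim (Sum.elim α β) γ, hwind, hwspan, hαP, hβM, ?_, ?_⟩
  · -- independence of the "plus components" family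
    rw [Fintype.linearIndependent_iff]
    intro lam hlam
    set x := ∑ k, lam k • Sum.elim α γ k with hxdef
    have hxW : x ∈ W := Submodule.sum_mem _ (by
      rintro (i | t) -
      · exact Submodule.smul_mem _ _ (hαW i)
      · exact Submodule.smul_mem _ _ (hγW t))
    have hxM : ∀ i, x (Sum.inl i) = 0 := by
      intro i
      have := congrFun hlam i
      rw [Finset.sum_apply] at this
      simp only [Pi.zero_apply] at this
      rw [hxdef, Finset.sum_apply]
      rw [← this]
      refine Finset.sum_congr rfl ?_
      rintro (i' | t) - <;> simp
    have hxB : x ∈ B := ⟨hxW, (mem_stdMinus_iff x).mpr hxM⟩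
    rw [← hβspan] at hxB
    obtain ⟨mu, hmu⟩ := (Submodule.mem_span_range_iff_exists_fun ℂ).mp hxB
    have hν := Fintype.linearIndependent_iff.mp hwind
      (Sum.elim (Sum.elim (fun i => lam (Sum.inl i)) (fun j => -mu j)) (fun t => lam (Sum.inr t)))
      (by
        rw [Fintype.sum_sum_type, Fintype.sum_sum_type]
        have hxsplit : x = (∑ i, lam (Sum.inl i) • α i) + ∑ t, lam (Sum.inr t) • γ t := by
          rw [hxdef, Fintype.sum_sum_type]
          simp only [Sum.elim_inl, Sum.elim_inr]
        have hneg : ∑ j, (-mu j) • β j = -x := by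
          rw [← hmu, ← Finset.sum_neg_distrib]
          exact Finset.sum_congr rfl (fun j _ => (neg_smul _ _))
        simp only [Sum.elim_inl, Sum.elim_inr]
        rw [hneg, hxsplit]
        abel)
    intro k
    cases k with
    | inl i => exact hν (Sum.inl (Sum.inl i))
    | inr t => exact hν (Sum.inr t)
  · -- independence of the "minus components" family
    rw [Fintype.linearIndependent_iff]
    intro lam hlam
    set x := ∑ k, lam k • Sum.elim β γ k with hxdef
    have hxW : x ∈ W := Submodule.sum_mem _ (by
      rintro (j | t) -
      · exact Submodule.smul_mem _ _ (hβW j)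
      · exact Submodule.smul_mem _ _ (hγW t))
    have hxP : ∀ j, x (Sum.inr j) = 0 := by
      intro j
      have := congrFun hlam j
      rw [Finset.sum_apply] at this
      simp only [Pi.zero_apply] at this
      rw [hxdef, Finset.sum_apply]
      rw [← this]
      refine Finset.sum_congr rfl ?_
      rintro (j' | t) - <;> simp
    have hxA : x ∈ A := ⟨hxW, (mem_stdPlus_iff x).mpr hxP⟩
    rw [← hαspan] at hxA
    obtain ⟨mu, hmu⟩ := (Submodule.mem_span_range_iff_exists_fun ℂ).mp hxA
    have hν := Fintype.linearIndependent_iff.mp hwind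
      (Sum.elim (Sum.elim (fun i => -mu i) (fun j => lam (Sum.inl j))) (fun t => lam (Sum.inr t)))
      (by
        rw [Fintype.sum_sum_type, Fintype.sum_sum_type]
        have hxsplit : x = (∑ j, lam (Sum.inl j) • β j) + ∑ t, lam (Sum.inr t) • γ t := by
          rw [hxdef, Fintype.sum_sum_type]
          simp only [Sum.elim_inl, Sum.elim_inr]
        have hneg : ∑ i, (-mu i) • α i = -x := by
          rw [← hmu, ← Finset.sum_neg_distrib]
          exact Finset.sum_congr rfl (fun i _ => (neg_smul _ _))
        simp only [Sum.elim_inl, Sum.elim_inr]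
        rw [hneg, hxsplit]
        abel)
    intro k
    cases k with
    | inl j => exact hν (Sum.inl (Sum.inr j))
    | inr t => exact hν (Sum.inr t)

lemma finrank_inf_add_finrank_inf_le {p q : ℕ} (W : Submodule ℂ (Fin p ⊕ Fin q → ℂ))
    (hbot : (W ⊓ stdPlus p q p) ⊓ (W ⊓ stdMinus p q q) = ⊥) :
    Module.finrank ℂ ↥(W ⊓ stdPlus p q p) + Module.finrank ℂ ↥(W ⊓ stdMinus p q q)
      ≤ Module.finrank ℂ ↥W := by
  have h := Submodule.finrank_sup_add_finrank_inf_eq (W ⊓ stdPlus p q p) (W ⊓ stdMinus p q q)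
  rw [hbot] at h
  simp only [finrank_bot, add_zero] at h
  have h2 : Module.finrank ℂ ↥((W ⊓ stdPlus p q p) ⊔ (W ⊓ stdMinus p q q))
      ≤ Module.finrank ℂ ↥W :=
    Submodule.finrank_mono (sup_le inf_le_left inf_le_left)
  omega

lemma inf_plus_inf_minus_eq_bot {p q : ℕ} (W : Submodule ℂ (Fin p ⊕ Fin q → ℂ)) :
    (W ⊓ stdPlus p q p) ⊓ (W ⊓ stdMinus p q q) = ⊥ := by
  rw [eq_bot_iff]
  intro x hx
  have h1 := (mem_stdPlus_iff x).mp hx.1.2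
  have h2 := (mem_stdMinus_iff x).mp hx.2.2
  have : x = 0 := by
    funext s
    cases s with
    | inl i => exact h2 i
    | inr j => exact h1 j
  simp [this]

lemma exists_block_of_dims (p q r : ℕ) (W W' : Submodule ℂ (Fin p ⊕ Fin q → ℂ))
    (hW : Module.finrank ℂ ↥W = r) (hW' : Module.finrank ℂ ↥W' = r)
    (h1 : Module.finrank ℂ ↥(W ⊓ stdPlus p q p) = Module.finrank ℂ ↥(W' ⊓ stdPlus p q p))
    (h2 : Module.finrank ℂ ↥(W ⊓ stdMinus p q q) = Module.finrank ℂ ↥(W' ⊓ stdMinus p q q)) :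
    ∃ (g₁ : Matrix (Fin p) (Fin p) ℂ) (g₂ : Matrix (Fin q) (Fin q) ℂ),
      IsUnit g₁ ∧ IsUnit g₂ ∧
      Submodule.map (Matrix.fromBlocks g₁ 0 0 g₂).mulVecLin W = W' := by
  set a := Module.finrank ℂ ↥(W ⊓ stdPlus p q p) with hadef
  set b := Module.finrank ℂ ↥(W ⊓ stdMinus p q q) with hbdef
  have hab : a + b ≤ r := by
    have := finrank_inf_add_finrank_inf_le W (inf_plus_inf_minus_eq_bot W)
    omega
  set c := r - (a + b) with hcdef
  have hc : Module.finrank ℂ ↥W = a + b + c := by omega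
  have hc' : Module.finrank ℂ ↥W' = a + b + c := by omega
  obtain ⟨w, hwind, hwspan, hwP, hwM, huind, hvind⟩ :=
    exists_adapted p q a b c W hadef.symm hbdef.symm hc
  obtain ⟨w', hwind', hwspan', hwP', hwM', huind', hvind'⟩ :=
    exists_adapted p q a b c W' h1.symm h2.symm hc'
  obtain ⟨f₁, hf₁⟩ := exists_equiv_mapsto _ _ huind huind'
  obtain ⟨f₂, hf₂⟩ := exists_equiv_mapsto _ _ hvind hvind'
  set g₁ := LinearMap.toMatrix' (f₁ : (Fin p → ℂ) →ₗ[ℂ] (Fin p → ℂ)) with hg₁def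
  set g₂ := LinearMap.toMatrix' (f₂ : (Fin q → ℂ) →ₗ[ℂ] (Fin q → ℂ)) with hg₂def
  have hmul₁ : g₁ * LinearMap.toMatrix' (f₁.symm : (Fin p → ℂ) →ₗ[ℂ] (Fin p → ℂ)) = 1 := by
    rw [hg₁def, ← LinearMap.toMatrix'_comp, ← LinearMap.toMatrix'_id]
    congr 1
    ext x : 1
    simp
  have hmul₂ : g₂ * LinearMap.toMatrix' (f₂.symm : (Fin q → ℂ) →ₗ[ℂ] (Fin q → ℂ)) = 1 := by
    rw [hg₂def, ← LinearMap.toMatrix'_comp, ← LinearMap.toMatrix'_id]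
    congr 1
    ext x : 1
    simp
  have hu₁ : IsUnit g₁ := by
    rw [Matrix.isUnit_iff_isUnit_det]
    refine IsUnit.of_mul_eq_one (LinearMap.toMatrix' (f₁.symm :
      (Fin p → ℂ) →ₗ[ℂ] (Fin p → ℂ))).det ?_
    rw [← Matrix.det_mul, hmul₁, Matrix.det_one]
  have hu₂ : IsUnit g₂ := by
    rw [Matrix.isUnit_iff_isUnit_det]
    refine IsUnit.of_mul_eq_one (LinearMap.toMatrix' (f₂.symm :
      (Fin q → ℂ) →ₗ[ℂ] (Fin q → ℂ))).det ?_
    rw [← Matrix.det_mul, hmul₂, Matrix.det_one]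
  refine ⟨g₁, g₂, hu₁, hu₂, ?_⟩
  have happ : ∀ x : Fin p ⊕ Fin q → ℂ,
      (Matrix.fromBlocks g₁ 0 0 g₂).mulVecLin x =
        Sum.elim (f₁ (fun i => x (Sum.inl i))) (f₂ (fun j => x (Sum.inr j))) := by
    intro x
    rw [Matrix.mulVecLin_apply, Matrix.fromBlocks_mulVec]
    simp only [Matrix.zero_mulVec, add_zero, zero_add]
    rw [hg₁def, hg₂def, ← Matrix.toLin'_apply (LinearMap.toMatrix' (f₁ : (Fin p → ℂ) →ₗ[ℂ] (Fin p → ℂ))),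
      ← Matrix.toLin'_apply (LinearMap.toMatrix' (f₂ : (Fin q → ℂ) →ₗ[ℂ] (Fin q → ℂ))),
      Matrix.toLin'_toMatrix', Matrix.toLin'_toMatrix']
    rfl
  have key : ∀ s, (Matrix.fromBlocks g₁ 0 0 g₂).mulVecLin (w s) = w' s := by
    rintro ((i | j) | t)
    · rw [happ]
      have e2 : (fun j => w (Sum.inl (Sum.inl i)) (Sum.inr j)) = (0 : Fin q → ℂ) :=
        funext (hwP i)
      have e1 := hf₁ (Sum.inl i)
      simp only [Sum.elim_inl] at e1
      rw [e2, map_zero, e1]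
      funext s'
      cases s' with
      | inl i' => rfl
      | inr j' => exact (hwP' i j').symm
    · rw [happ]
      have e2 : (fun i => w (Sum.inl (Sum.inr j)) (Sum.inl i)) = (0 : Fin p → ℂ) :=
        funext (hwM j)
      have e1 := hf₂ (Sum.inl j)
      simp only [Sum.elim_inl] at e1
      rw [e2, map_zero, e1]
      funext s'
      cases s' with
      | inl i' => exact (hwM' j i').symm
      | inr j' => rfl
    · have e1 := hf₁ (Sum.inr t)
      have e2 := hf₂ (Sum.inr t)
      simp only [Sum.elim_inr] at e1 e2
      rw [happ, e1, e2]
      funext s'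
      cases s' with
      | inl i' => rfl
      | inr j' => rfl
  rw [← hwspan, Submodule.map_span, ← Set.range_comp,
    show ((Matrix.fromBlocks g₁ 0 0 g₂).mulVecLin ∘ w) = w' from funext key, hwspan']

lemma forward_inf_eq {p q : ℕ} (W : Submodule ℂ (Fin p ⊕ Fin q → ℂ))
    (g₁ : Matrix (Fin p) (Fin p) ℂ) (g₂ : Matrix (Fin q) (Fin q) ℂ)
    (hg₁ : IsUnit g₁) (hg₂ : IsUnit g₂) :
    Module.finrank ℂ ↥(Submodule.map (Matrix.fromBlocks g₁ 0 0 g₂).mulVecLin W ⊓ stdPlus p q p)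
      = Module.finrank ℂ ↥(W ⊓ stdPlus p q p) ∧
    Module.finrank ℂ ↥(Submodule.map (Matrix.fromBlocks g₁ 0 0 g₂).mulVecLin W ⊓ stdMinus p q q)
      = Module.finrank ℂ ↥(W ⊓ stdMinus p q q) := by
  have hdet : IsUnit (Matrix.fromBlocks g₁ 0 0 g₂).det := by
    rw [Matrix.det_fromBlocks_zero₂₁]
    exact ((Matrix.isUnit_iff_isUnit_det _).mp hg₁).mul ((Matrix.isUnit_iff_isUnit_det _).mp hg₂)
  letI inst := (Matrix.fromBlocks g₁ 0 0 g₂).invertibleOfIsUnitDet hdet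
  set G := (Matrix.fromBlocks g₁ 0 0 g₂).toLinearEquiv' inst with hGdef
  have hGcoe : (G : (Fin p ⊕ Fin q → ℂ) →ₗ[ℂ] (Fin p ⊕ Fin q → ℂ))
      = (Matrix.fromBlocks g₁ 0 0 g₂).mulVecLin := by
    rw [hGdef, Matrix.toLinearEquiv'_apply, Matrix.toLin'_apply']
  have hplus : Submodule.map (G : (Fin p ⊕ Fin q → ℂ) →ₗ[ℂ] (Fin p ⊕ Fin q → ℂ))
      (stdPlus p q p) = stdPlus p q p := by
    apply Submodule.eq_of_le_of_finrank_le
    · rintro _ ⟨x, hx, rfl⟩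
      have hx0 : (x ∘ Sum.inr) = (0 : Fin q → ℂ) := funext ((mem_stdPlus_iff x).mp hx)
      have hGx : (G : (Fin p ⊕ Fin q → ℂ) →ₗ[ℂ] (Fin p ⊕ Fin q → ℂ)) x
          = (Matrix.fromBlocks g₁ 0 0 g₂).mulVecLin x := LinearMap.congr_fun hGcoe x
      rw [mem_stdPlus_iff]
      intro j
      rw [hGx, Matrix.mulVecLin_apply, Matrix.fromBlocks_mulVec]
      simp [hx0, Matrix.zero_mulVec, Matrix.mulVec_zero]
    · rw [LinearEquiv.finrank_map_eq]
  have hminus : Submodule.map (G : (Fin p ⊕ Fin q → ℂ) →ₗ[ℂ] (Fin p ⊕ Fin q → ℂ))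
      (stdMinus p q q) = stdMinus p q q := by
    apply Submodule.eq_of_le_of_finrank_le
    · rintro _ ⟨x, hx, rfl⟩
      have hx0 : (x ∘ Sum.inl) = (0 : Fin p → ℂ) := funext ((mem_stdMinus_iff x).mp hx)
      have hGx : (G : (Fin p ⊕ Fin q → ℂ) →ₗ[ℂ] (Fin p ⊕ Fin q → ℂ)) x
          = (Matrix.fromBlocks g₁ 0 0 g₂).mulVecLin x := LinearMap.congr_fun hGcoe x
      rw [mem_stdMinus_iff]
      intro i
      rw [hGx, Matrix.mulVecLin_apply, Matrix.fromBlocks_mulVec]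
      simp [hx0, Matrix.zero_mulVec, Matrix.mulVec_zero]
    · rw [LinearEquiv.finrank_map_eq]
  have eplus : Submodule.map (G : (Fin p ⊕ Fin q → ℂ) →ₗ[ℂ] (Fin p ⊕ Fin q → ℂ)) W ⊓ stdPlus p q p
      = Submodule.map (G : (Fin p ⊕ Fin q → ℂ) →ₗ[ℂ] (Fin p ⊕ Fin q → ℂ)) (W ⊓ stdPlus p q p) := by
    conv_lhs => rw [← hplus]
    exact (Submodule.map_inf _ G.injective).symm
  have eminus : Submodule.map (G : (Fin p ⊕ Fin q → ℂ) →ₗ[ℂ] (Fin p ⊕ Fin q → ℂ)) W ⊓ stdMinus p q q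
      = Submodule.map (G : (Fin p ⊕ Fin q → ℂ) →ₗ[ℂ] (Fin p ⊕ Fin q → ℂ)) (W ⊓ stdMinus p q q) := by
    conv_lhs => rw [← hminus]
    exact (Submodule.map_inf _ G.injective).symm
  constructor
  · rw [← hGcoe, eplus, LinearEquiv.finrank_map_eq]
  · rw [← hGcoe, eminus, LinearEquiv.finrank_map_eq]

theorem K_orbit_on_grassmannian_iff (p q r : ℕ) (hr : r ≤ p + q)
    (W W' : Submodule ℂ (Fin p ⊕ Fin q → ℂ))
    (hW : Module.finrank ℂ ↥W = r) (hW' : Module.finrank ℂ ↥W' = r) :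
    (∃ (g₁ : Matrix (Fin p) (Fin p) ℂ) (g₂ : Matrix (Fin q) (Fin q) ℂ),
        IsUnit g₁ ∧ IsUnit g₂ ∧
        Submodule.map (Matrix.fromBlocks g₁ 0 0 g₂).mulVecLin W = W') ↔
    (Module.finrank ℂ ↥(W ⊓ stdPlus p q p) = Module.finrank ℂ ↥(W' ⊓ stdPlus p q p) ∧
     Module.finrank ℂ ↥(W ⊓ stdMinus p q q) = Module.finrank ℂ ↥(W' ⊓ stdMinus p q q)) := by
  constructor
  · rintro ⟨g₁, g₂, hg₁, hg₂, hmap⟩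
    obtain ⟨e1, e2⟩ := forward_inf_eq W g₁ g₂ hg₁ hg₂
    rw [hmap] at e1 e2
    exact ⟨e1.symm, e2.symm⟩
  · rintro ⟨h1, h2⟩
    exact exists_block_of_dims p q r W W' hW hW' h1 h2
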